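/- Let β > 1 and let (ζ_t)_{t≥0} be a spectrally positive β-stable Lévy process (no negative jumps) normalized so that its subordinator of first passage times τ_{-s} = inf{t : ζ_t = -s} is a stable subordinator of index 1/β. Then for all a, b > 0, E[τ_{-a} / τ_{-(a+b)}] = a/(a+b). -/

import Mathlib

open MeasureTheory ProbabilityTheory Filter Set

/-- A process `T` (here `T s` plays the role of the first passage time `τ_{-s}`) has
stationary, independent increments. -/
def StationaryIndepIncrements {Ω : Type*} [MeasurableSpace Ω] (P : Measure Ω)
    (T : ℝ → Ω → ℝ) : Prop :=
  (∀ (n : ℕ) (t : ℕ → ℝ), Monotone t → (∀ i, 0 ≤ t i) →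
      iIndepFun
        (fun i : Fin n => fun ω => T (t (i.1 + 1)) ω - T (t i.1) ω) P) ∧
  (∀ s t : ℝ, 0 ≤ s → s ≤ t →
      Measure.map (fun ω => T t ω - T s ω) P = Measure.map (fun ω => T (t - s) ω) P)



set_option maxHeartbeats 1000000

section Helpers
set_option linter.unusedSectionVars false
set_option maxHeartbeats 1000000

set_option linter.unusedSectionVars false

variable {Ω : Type*} [MeasurableSpace Ω] {P : Measure Ω} [IsProbabilityMeasure P]
  {T : ℝ → Ω → ℝ}

lemma aux_bounds (h0 : ∀ᵐ ω ∂P, T 0 ω = 0)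
    (hpos : ∀ s, 0 < s → ∀ᵐ ω ∂P, 0 < T s ω)
    (hmono : ∀ s t : ℝ, 0 ≤ s → s ≤ t → ∀ᵐ ω ∂P, T s ω ≤ T t ω)
    {s t : ℝ} (hs : 0 ≤ s) (hst : s ≤ t) (ht : 0 < t) :
    ∀ᵐ ω ∂P, 0 ≤ T s ω / T t ω ∧ T s ω / T t ω ≤ 1 := by
  filter_upwards [h0, hpos t ht, hmono 0 s le_rfl hs, hmono s t hs hst] with ω e0 ept h1 h2
  refine ⟨div_nonneg (by linarith) ept.le, div_le_one_of_le₀ h2 ept.le⟩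

lemma aux_integrable (hmeas : ∀ s, Measurable (T s))
    (h0 : ∀ᵐ ω ∂P, T 0 ω = 0)
    (hpos : ∀ s, 0 < s → ∀ᵐ ω ∂P, 0 < T s ω)
    (hmono : ∀ s t : ℝ, 0 ≤ s → s ≤ t → ∀ᵐ ω ∂P, T s ω ≤ T t ω)
    {s t : ℝ} (hs : 0 ≤ s) (hst : s ≤ t) (ht : 0 < t) :
    Integrable (fun ω => T s ω / T t ω) P := by
  refine Integrable.mono' (integrable_const 1)
    (((hmeas s).div (hmeas t)).aestronglyMeasurable) ?_
  filter_upwards [aux_bounds h0 hpos hmono hs hst ht] with ω hω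
  rw [Real.norm_eq_abs, abs_of_nonneg hω.1]; exact hω.2

lemma aux_key (hmeas : ∀ s, Measurable (T s))
    (h0 : ∀ᵐ ω ∂P, T 0 ω = 0)
    (hSI : StationaryIndepIncrements P T)
    {u v t : ℝ} (hu : 0 ≤ u) (hv : 0 ≤ v) (huv : u + v ≤ t) :
    ∫ ω, (T (u + v) ω - T u ω) / T t ω ∂P = ∫ ω, T v ω / T t ω ∂P := by
  have hvt : v ≤ t := by linarith
  have hut : u ≤ t - v := by linarith
  have htv : 0 ≤ t - v := by linarith
  set X : Ω → ℝ := fun ω => T u ω - T 0 ω with hX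
  set Y : Ω → ℝ := fun ω => T (u + v) ω - T u ω with hY
  set Z : Ω → ℝ := fun ω => T t ω - T (u + v) ω with hZ
  set X' : Ω → ℝ := fun ω => T v ω - T 0 ω with hX'
  set Z' : Ω → ℝ := fun ω => T t ω - T v ω with hZ'
  set B : Ω → ℝ := fun ω => T (t - v) ω - T u ω with hB
  have mX : Measurable X := (hmeas _).sub (hmeas _)
  have mY : Measurable Y := (hmeas _).sub (hmeas _)
  have mZ : Measurable Z := (hmeas _).sub (hmeas _)
  have mX' : Measurable X' := (hmeas _).sub (hmeas _)
  have mZ' : Measurable Z' := (hmeas _).sub (hmeas _)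
  have mB : Measurable B := (hmeas _).sub (hmeas _)
  -- three increments independent
  have h3 : iIndepFun ![X, Y, Z] P := by
    have hm : Monotone (fun k : ℕ => if k = 0 then 0 else if k = 1 then u else if k = 2 then u + v else t) := by
      apply monotone_nat_of_le_succ
      intro n
      rcases n with _ | _ | _ | n <;> simp <;> linarith
    have hnn : ∀ i, (0:ℝ) ≤ (fun k : ℕ => if k = 0 then 0 else if k = 1 then u else if k = 2 then u + v else t) i := by
      intro i
      rcases i with _ | _ | _ | n <;> simp <;> linarith
    have := hSI.1 3 _ hm hnn
    convert this using 1
    funext i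
    fin_cases i <;> simp [X, Y, Z]
  -- pair (X', Z') independent
  have h2 : iIndepFun ![X', Z'] P := by
    have hm : Monotone (fun k : ℕ => if k = 0 then 0 else if k = 1 then v else t) := by
      apply monotone_nat_of_le_succ
      intro n
      rcases n with _ | _ | n <;> simp <;> linarith
    have hnn : ∀ i, (0:ℝ) ≤ (fun k : ℕ => if k = 0 then 0 else if k = 1 then v else t) i := by
      intro i
      rcases i with _ | _ | n <;> simp <;> linarith
    have := hSI.1 2 _ hm hnn
    convert this using 1
    funext i
    fin_cases i <;> simp [X', Z']
  -- pair (X, B) independent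
  have h2' : iIndepFun ![X, B] P := by
    have hm : Monotone (fun k : ℕ => if k = 0 then 0 else if k = 1 then u else t - v) := by
      apply monotone_nat_of_le_succ
      intro n
      rcases n with _ | _ | n <;> simp <;> linarith
    have hnn : ∀ i, (0:ℝ) ≤ (fun k : ℕ => if k = 0 then 0 else if k = 1 then u else t - v) i := by
      intro i
      rcases i with _ | _ | n <;> simp <;> linarith
    have := hSI.1 2 _ hm hnn
    convert this using 1
    funext i
    fin_cases i <;> simp [X, B]
  have m3 : ∀ i, Measurable (![X, Y, Z] i) := by
    intro i; fin_cases i <;> simpa using by assumption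
  -- pairwise independences
  have iXZ : IndepFun X Z P := by
    have := h3.indepFun (show (0 : Fin 3) ≠ 2 by decide)
    simpa using this
  have iXB : IndepFun X B P := by
    have := h2'.indepFun (show (0 : Fin 2) ≠ 1 by decide)
    simpa using this
  have iX'Z' : IndepFun X' Z' P := by
    have := h2.indepFun (show (0 : Fin 2) ≠ 1 by decide)
    simpa using this
  have iYW : IndepFun Y (fun ω => X ω + Z ω) P := by
    have := h3.indepFun_add_right m3 1 0 2 (by decide) (by decide)
    simp at this; exact this
  -- marginal laws
  have lawY : Measure.map Y P = Measure.map (fun ω => T v ω) P := by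
    have := hSI.2 u (u + v) hu (by linarith)
    simpa [add_sub_cancel_left] using this
  have lawX : Measure.map X P = Measure.map (fun ω => T u ω) P := by
    simpa [sub_zero] using hSI.2 0 u le_rfl hu
  have lawZ : Measure.map Z P = Measure.map (fun ω => T (t - (u + v)) ω) P :=
    hSI.2 (u + v) t (by linarith) (by linarith)
  have lawX' : Measure.map X' P = Measure.map (fun ω => T v ω) P := by
    simpa [sub_zero] using hSI.2 0 v le_rfl hv
  have lawZ' : Measure.map Z' P = Measure.map (fun ω => T (t - v) ω) P :=
    hSI.2 v t hv hvt
  have lawB : Measure.map B P = Measure.map (fun ω => T (t - (u + v)) ω) P := by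
    have := hSI.2 u (t - v) hu hut
    rwa [show t - v - u = t - (u + v) by ring] at this
  -- joint laws
  have jXZ : Measure.map (fun ω => (X ω, Z ω)) P = (Measure.map X P).prod (Measure.map Z P) :=
    (indepFun_iff_map_prod_eq_prod_map_map mX.aemeasurable mZ.aemeasurable).mp iXZ
  have jXB : Measure.map (fun ω => (X ω, B ω)) P = (Measure.map X P).prod (Measure.map B P) :=
    (indepFun_iff_map_prod_eq_prod_map_map mX.aemeasurable mB.aemeasurable).mp iXB
  -- law of W = X + Z
  have lawW : Measure.map (fun ω => X ω + Z ω) P = Measure.map (fun ω => T (t - v) ω) P := by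
    calc Measure.map (fun ω => X ω + Z ω) P
        = Measure.map (fun p : ℝ × ℝ => p.1 + p.2) (Measure.map (fun ω => (X ω, Z ω)) P) :=
          (Measure.map_map measurable_add (mX.prodMk mZ)).symm
      _ = Measure.map (fun p : ℝ × ℝ => p.1 + p.2) (Measure.map (fun ω => (X ω, B ω)) P) := by
          rw [jXZ, jXB, lawZ, lawB]
      _ = Measure.map (fun ω => X ω + B ω) P := Measure.map_map measurable_add (mX.prodMk mB)
      _ = Measure.map (fun ω => T (t - v) ω - T 0 ω) P := by
          congr 1; funext ω; simp only [hX, hB]; ring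
      _ = Measure.map (fun ω => T (t - v) ω) P := by
          simpa [sub_zero] using hSI.2 0 (t - v) le_rfl htv
  -- joint law equality
  have jYW : Measure.map (fun ω => (Y ω, X ω + Z ω)) P
      = Measure.map (fun ω => (X' ω, Z' ω)) P := by
    rw [(indepFun_iff_map_prod_eq_prod_map_map mY.aemeasurable (show Measurable (fun ω => X ω + Z ω) from mX.add mZ).aemeasurable).mp iYW,
      (indepFun_iff_map_prod_eq_prod_map_map mX'.aemeasurable mZ'.aemeasurable).mp iX'Z',
      lawY, lawW, lawX', lawZ']
  -- integral transfer
  have hF : Measurable (fun p : ℝ × ℝ => p.1 / (p.1 + p.2)) :=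
    measurable_fst.div (measurable_fst.add measurable_snd)
  have e2 : ∫ ω, Y ω / (Y ω + (X ω + Z ω)) ∂P = ∫ ω, X' ω / (X' ω + Z' ω) ∂P := by
    have t1 := integral_map (φ := fun ω => (Y ω, X ω + Z ω)) (μ := P)
      ((mY.prodMk (mX.add mZ)).aemeasurable)
      (f := fun p : ℝ × ℝ => p.1 / (p.1 + p.2)) hF.aestronglyMeasurable
    have t2 := integral_map (φ := fun ω => (X' ω, Z' ω)) (μ := P)
      ((mX'.prodMk mZ').aemeasurable)
      (f := fun p : ℝ × ℝ => p.1 / (p.1 + p.2)) hF.aestronglyMeasurable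
    calc ∫ ω, Y ω / (Y ω + (X ω + Z ω)) ∂P
        = ∫ p : ℝ × ℝ, p.1 / (p.1 + p.2) ∂(Measure.map (fun ω => (Y ω, X ω + Z ω)) P) := t1.symm
      _ = ∫ p : ℝ × ℝ, p.1 / (p.1 + p.2) ∂(Measure.map (fun ω => (X' ω, Z' ω)) P) := by rw [jYW]
      _ = ∫ ω, X' ω / (X' ω + Z' ω) ∂P := t2
  -- a.e. rewriting
  calc ∫ ω, (T (u + v) ω - T u ω) / T t ω ∂P
      = ∫ ω, Y ω / (Y ω + (X ω + Z ω)) ∂P := by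
        apply integral_congr_ae
        filter_upwards [h0] with ω e0
        have hden : Y ω + (X ω + Z ω) = T t ω := by simp only [hX, hY, hZ]; linarith
        rw [hden]
    _ = ∫ ω, X' ω / (X' ω + Z' ω) ∂P := e2
    _ = ∫ ω, T v ω / T t ω ∂P := by
        apply integral_congr_ae
        filter_upwards [h0] with ω e0
        have h1 : X' ω = T v ω := by simp only [hX']; linarith
        have h2 : X' ω + Z' ω = T t ω := by simp only [hX', hZ']; linarith
        rw [h2, h1]

end Helpers


/-- Let `β > 1` and let `(ζ_t)` be a spectrally positive `β`-stable Lévy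
process, normalized so that its first passage times `T s = τ_{-s} = inf {t : ζ_t = -s}`
form a stable subordinator of index `1/β` (encoded here by the hypotheses that
`s ↦ T s` starts at `0`, is nonnegative and nondecreasing, has stationary independent
increments, and has Laplace transform `E[exp (-l * T s)] = exp (-(s * l^(1/β)))`).
Then for all `a, b > 0`, `E[T a / T (a + b)] = a / (a + b)`. -/
theorem subordinator_passage_time_ratio
    {Ω : Type*} [MeasurableSpace Ω] (P : Measure Ω) [IsProbabilityMeasure P]
    (β : ℝ) (hβ : 1 < β)
    (T : ℝ → Ω → ℝ)
    (hmeas : ∀ s, Measurable (T s))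
    (h0 : ∀ᵐ ω ∂P, T 0 ω = 0)
    (hpos : ∀ s, 0 < s → ∀ᵐ ω ∂P, 0 < T s ω)
    (hmono : ∀ s t : ℝ, 0 ≤ s → s ≤ t → ∀ᵐ ω ∂P, T s ω ≤ T t ω)
    (hSI : StationaryIndepIncrements P T)
    (hLap : ∀ l s : ℝ, 0 < l → 0 < s →
      ∫ ω, Real.exp (-(l * T s ω)) ∂P = Real.exp (-(s * l ^ (1 / β))))
    (a b : ℝ) (ha : 0 < a) (hb : 0 < b) :
    ∫ ω, T a ω / T (a + b) ω ∂P = a / (a + b) := by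
  have ht : 0 < a + b := by linarith
  set g : ℝ → ℝ := fun s => ∫ ω, T s ω / T (a + b) ω ∂P with hg
  show g a = a / (a + b)
  have integ : ∀ s : ℝ, 0 ≤ s → s ≤ a + b → Integrable (fun ω => T s ω / T (a + b) ω) P :=
    fun s hs hst => aux_integrable hmeas h0 hpos hmono hs hst ht
  have g0 : g 0 = 0 := by
    show ∫ ω, T 0 ω / T (a + b) ω ∂P = 0
    rw [integral_congr_ae (g := fun _ => (0:ℝ)) ?_, integral_zero]
    filter_upwards [h0] with ω e0
    simp [e0]
  have gt1 : g (a + b) = 1 := by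
    show ∫ ω, T (a + b) ω / T (a + b) ω ∂P = 1
    rw [integral_congr_ae (g := fun _ => (1:ℝ)) ?_]
    · simp
    · filter_upwards [hpos (a + b) ht] with ω hp
      exact div_self hp.ne'
  have gadd : ∀ u v : ℝ, 0 ≤ u → 0 ≤ v → u + v ≤ a + b → g (u + v) = g u + g v := by
    intro u v hu hv huv
    have key := aux_key hmeas h0 hSI hu hv huv (t := a + b)
    have hsplit : ∫ ω, (T (u + v) ω - T u ω) / T (a + b) ω ∂P = g (u + v) - g u := by
      show _ = (∫ ω, T (u + v) ω / T (a + b) ω ∂P) - ∫ ω, T u ω / T (a + b) ω ∂P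
      rw [← integral_sub (integ (u + v) (by linarith) huv) (integ u hu (by linarith))]
      apply integral_congr_ae
      exact ae_of_all _ fun ω => by simp [sub_div]
    have : g (u + v) - g u = g v := by rw [← hsplit, key]
    linarith
  have gmono : ∀ u v : ℝ, 0 ≤ u → u ≤ v → v ≤ a + b → g u ≤ g v := by
    intro u v hu huv hv
    apply integral_mono_ae (integ u hu (huv.trans hv)) (integ v (hu.trans huv) hv)
    filter_upwards [hpos (a + b) ht, hmono u v hu huv] with ω hp hm
    gcongr
  have gmul : ∀ (n : ℕ) (c : ℝ), 0 ≤ c → (n : ℝ) * c ≤ a + b → g ((n : ℝ) * c) = n * g c := by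
    intro n
    induction n with
    | zero => intro c hc h; simpa using g0
    | succ n ih =>
      intro c hc h
      have hn1 : (n : ℝ) * c ≤ a + b := by push_cast at h; nlinarith
      have hadd := gadd ((n : ℝ) * c) c (by positivity) hc (by push_cast at h ⊢; linarith)
      have : ((n : ℕ) + 1 : ℝ) * c = (n : ℝ) * c + c := by ring
      push_cast
      rw [show ((n : ℝ) + 1) * c = (n : ℝ) * c + c by ring, hadd, ih c hc hn1]
      ring
  have gdiv : ∀ n : ℕ, 0 < n → g ((a + b) / n) = 1 / n := by
    intro n hn
    have hne : (n : ℝ) ≠ 0 := Nat.cast_ne_zero.mpr hn.ne'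
    have h1 := gmul n ((a + b) / n) (by positivity)
      (by rw [show (n : ℝ) * ((a + b) / n) = a + b from by field_simp])
    rw [show (n : ℝ) * ((a + b) / n) = a + b from by field_simp, gt1] at h1
    field_simp at h1 ⊢
    linarith
  -- squeeze
  have habs : ∀ n : ℕ, 0 < n → |g a - a / (a + b)| ≤ 1 / n := by
    intro n hn
    have hnR : (0 : ℝ) < n := by exact_mod_cast hn
    set m := ⌊a * n / (a + b)⌋₊ with hm
    have hfl : (m : ℝ) ≤ a * n / (a + b) := Nat.floor_le (by positivity)
    have hfl2 : a * n / (a + b) < (m : ℝ) + 1 := Nat.lt_floor_add_one _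
    have hmab : (m : ℝ) * (a + b) ≤ a * n := (le_div_iff₀ ht).mp hfl
    have hab1 : a * n ≤ ((m : ℝ) + 1) * (a + b) := ((div_lt_iff₀ ht).mp hfl2).le
    have hmn : (m : ℝ) + 1 ≤ n := by
      have h1 : a * n / (a + b) < n := by rw [div_lt_iff₀ ht]; nlinarith
      have h2 : (m : ℝ) < n := lt_of_le_of_lt hfl h1
      have h3 : m < n := by exact_mod_cast h2
      exact_mod_cast h3
    have key1 : (m : ℝ) * ((a + b) / n) ≤ a := by
      rw [mul_div_assoc', div_le_iff₀ hnR]; nlinarith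
    have key2 : a ≤ ((m : ℝ) + 1) * ((a + b) / n) := by
      rw [mul_div_assoc', le_div_iff₀ hnR]; nlinarith
    have key3 : ((m : ℝ) + 1) * ((a + b) / n) ≤ a + b := by
      rw [mul_div_assoc', div_le_iff₀ hnR]; nlinarith
    have hga1 : (m : ℝ) / n ≤ g a := by
      have h1 := gmono ((m : ℝ) * ((a + b) / n)) a (by positivity) key1 (by linarith)
      rw [gmul m ((a + b) / n) (by positivity) (by nlinarith), gdiv n hn] at h1
      calc (m : ℝ) / n = m * (1 / n) := by ring
        _ ≤ g a := h1
    have hga2 : g a ≤ ((m : ℝ) + 1) / n := by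
      have h1 := gmono a (((m : ℝ) + 1) * ((a + b) / n)) ha.le key2 key3
      have h2 : (((m + 1 : ℕ)) : ℝ) * ((a + b) / n) = ((m : ℝ) + 1) * ((a + b) / n) := by
        push_cast; ring
      have h3 := gmul (m + 1) ((a + b) / n) (by positivity) (by rw [h2]; exact key3)
      rw [h2, gdiv n hn] at h3
      rw [h3] at h1
      calc g a ≤ ((m + 1 : ℕ) : ℝ) * (1 / n) := h1
        _ = ((m : ℝ) + 1) / n := by push_cast; ring
    have hr1 : (m : ℝ) / n ≤ a / (a + b) := by
      rw [div_le_div_iff₀ hnR ht]; nlinarith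
    have hr2 : a / (a + b) ≤ ((m : ℝ) + 1) / n := by
      rw [div_le_div_iff₀ ht hnR]; nlinarith
    have hlen : ((m : ℝ) + 1) / n - (m : ℝ) / n = 1 / n := by ring
    rw [abs_le]
    constructor <;> linarith
  have hzero : |g a - a / (a + b)| = 0 := by
    by_contra h
    have hpos' : 0 < |g a - a / (a + b)| := lt_of_le_of_ne (abs_nonneg _) (Ne.symm h)
    obtain ⟨n, hn⟩ := exists_nat_one_div_lt hpos'
    have h1 := habs (n + 1) n.succ_pos
    push_cast at h1
    linarith
  have := abs_eq_zero.mp hzero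
  linarith
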